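/- Let V : ℝ^d → ℝ be continuously differentiable with ⟨∇V(x) − ∇V(y), x − y⟩ ≥ m_V ‖x − y‖² − M_V for all x, y, where m_V > 0 and M_V ≥ 0, and let W : ℝ^d → ℝ be differentiable with ‖∇W(z)‖ ≤ η ‖z‖ for all z. Then for every probability measure μ on ℝ^d with m = ∫ ‖x‖² μ(dx) < ∞, −2 ∫ ⟨x, ∇V(x)⟩ μ(dx) − ∫∫ ⟨x − y, ∇W(x − y)⟩ μ(dx) μ(dy) ≤ 2 M_V + 2(η − m_V) m + 2 ‖∇V(0)‖ m^{1/2}. -/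

import Mathlib

open MeasureTheory Real Set
open scoped RealInnerProductSpace

set_option maxHeartbeats 2000000

/-- if `⟨∇V(x) − ∇V(y), x − y⟩ ≥ m_V ‖x − y‖² − M_V` with `m_V > 0`, `M_V ≥ 0`,
and `‖∇W(z)‖ ≤ η‖z‖`, then for every probability measure `μ` with finite second moment
`m = ∫ ‖x‖² μ(dx)`,
`−2 ∫ ⟨x, ∇V(x)⟩ μ(dx) − ∫∫ ⟨x − y, ∇W(x − y)⟩ μ(dx) μ(dy)
  ≤ 2 M_V + 2(η − m_V) m + 2 ‖∇V(0)‖ m^{1/2}`. -/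
theorem stmt16 {d : ℕ} (V W : EuclideanSpace ℝ (Fin d) → ℝ)
    (hV : ContDiff ℝ 1 V)
    (mV MV : ℝ) (hmV : 0 < mV) (hMV : 0 ≤ MV)
    (hVconv : ∀ x y : EuclideanSpace ℝ (Fin d),
      mV * ‖x - y‖ ^ 2 - MV ≤ ⟪gradient V x - gradient V y, x - y⟫)
    (hW : Differentiable ℝ W)
    (η : ℝ) (hgrad : ∀ z : EuclideanSpace ℝ (Fin d), ‖gradient W z‖ ≤ η * ‖z‖)
    (μ : Measure (EuclideanSpace ℝ (Fin d))) [IsProbabilityMeasure μ]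
    (hμ2 : Integrable (fun x => ‖x‖ ^ 2) μ)
    (hVint : Integrable (fun x => ⟪x, gradient V x⟫) μ) :
    -2 * ∫ x, ⟪x, gradient V x⟫ ∂μ - ∫ x, ∫ y, ⟪x - y, gradient W (x - y)⟫ ∂μ ∂μ
      ≤ 2 * MV + 2 * (η - mV) * ∫ x, ‖x‖ ^ 2 ∂μ
        + 2 * ‖gradient V 0‖ * Real.sqrt (∫ x, ‖x‖ ^ 2 ∂μ) := by
  rcases Nat.eq_zero_or_pos d with hd | hd
  · -- trivial case: d = 0, everything is zero
    subst hd
    have hz : ∀ x : EuclideanSpace ℝ (Fin 0), x = 0 := fun x => Subsingleton.elim x 0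
    have h1 : (fun x : EuclideanSpace ℝ (Fin 0) => ⟪x, gradient V x⟫) = fun _ => (0:ℝ) := by
      funext x; rw [hz x]; simp
    have h2 : (fun x : EuclideanSpace ℝ (Fin 0) => ‖x‖ ^ 2) = fun _ => (0:ℝ) := by
      funext x; rw [hz x]; simp
    have h3 : ∀ x : EuclideanSpace ℝ (Fin 0),
        (fun y : EuclideanSpace ℝ (Fin 0) => ⟪x - y, gradient W (x - y)⟫) = fun _ => (0:ℝ) := by
      intro x; funext y
      rw [show x - y = 0 from Subsingleton.elim _ _]
      simp
    simp only [h1, h2, integral_zero]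
    have h4 : ∫ x, ∫ y, ⟪x - y, gradient W (x - y)⟫ ∂μ ∂μ = 0 := by
      have : (fun x : EuclideanSpace ℝ (Fin 0) =>
          ∫ y, ⟪x - y, gradient W (x - y)⟫ ∂μ) = fun _ => (0:ℝ) := by
        funext x; rw [h3 x]; simp
      rw [this]; simp
    rw [h4]
    simp only [Real.sqrt_zero, mul_zero]
    linarith
  -- main case: d > 0
  set m := ∫ x, ‖x‖ ^ 2 ∂μ with hm
  have hη : 0 ≤ η := by
    have h := (norm_nonneg (gradient W (EuclideanSpace.single (⟨0, hd⟩ : Fin d) 1))).trans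
      (hgrad _)
    simpa [EuclideanSpace.norm_single] using h
  have hm0 : 0 ≤ m := integral_nonneg fun x => sq_nonneg _
  -- integrability of ‖x‖ and of the identity
  have hnorm : Integrable (fun x : (EuclideanSpace ℝ (Fin d)) => ‖x‖) μ := by
    refine ((integrable_const (1:ℝ)).add hμ2).mono' measurable_norm.aestronglyMeasurable ?_
    filter_upwards with x
    simp only [Pi.add_apply]
    rw [Real.norm_eq_abs, abs_of_nonneg (norm_nonneg x)]
    nlinarith [norm_nonneg x, sq_nonneg (‖x‖ - 1)]
  have hid : Integrable (fun x : (EuclideanSpace ℝ (Fin d)) => x) μ :=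
    (integrable_norm_iff aestronglyMeasurable_id).mp hnorm
  set b := ∫ x, x ∂μ with hb
  have hinner2 : ∀ x : (EuclideanSpace ℝ (Fin d)), Integrable (fun y => ⟪x, y⟫) μ := fun x => by
    exact (innerSL ℝ x).integrable_comp hid
  have hinner : ∀ x : (EuclideanSpace ℝ (Fin d)), ∫ y, ⟪x, y⟫ ∂μ = ⟪x, b⟫ := fun x => by
    exact (innerSL ℝ x).integral_comp_comm hid
  have hinner2' : Integrable (fun x : (EuclideanSpace ℝ (Fin d)) => ⟪x, b⟫) μ := by
    have h := hinner2 b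
    have heq : (fun x : (EuclideanSpace ℝ (Fin d)) => ⟪x, b⟫) = fun y => ⟪b, y⟫ :=
      funext fun y => real_inner_comm _ _
    rw [heq]; exact h
  -- STEP A : lower bound for ∫ ⟪x, ∇V x⟫
  have hpt : ∀ x : (EuclideanSpace ℝ (Fin d)), mV * ‖x‖ ^ 2 - MV - ‖gradient V 0‖ * ‖x‖ ≤ ⟪x, gradient V x⟫ := by
    intro x
    have h0 := hVconv x 0
    rw [sub_zero] at h0
    have h1 : ⟪gradient V x - gradient V 0, x⟫
        = ⟪x, gradient V x⟫ - ⟪gradient V 0, x⟫ := by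
      rw [inner_sub_left, real_inner_comm x (gradient V x)]
    have h2 := abs_real_inner_le_norm (gradient V 0) x
    have h3 := (abs_le.mp h2).1
    linarith
  have hintA : Integrable (fun x : (EuclideanSpace ℝ (Fin d)) => mV * ‖x‖ ^ 2 - MV - ‖gradient V 0‖ * ‖x‖) μ :=
    ((hμ2.const_mul mV).sub (integrable_const MV)).sub (hnorm.const_mul _)
  have i1 : Integrable (fun x : (EuclideanSpace ℝ (Fin d)) => mV * ‖x‖ ^ 2) μ := hμ2.const_mul mV
  have i2 : Integrable (fun _ : (EuclideanSpace ℝ (Fin d)) => MV) μ := integrable_const MV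
  have i3 : Integrable (fun x : (EuclideanSpace ℝ (Fin d)) => ‖gradient V 0‖ * ‖x‖) μ :=
    hnorm.const_mul _
  have i12 : Integrable (fun x : (EuclideanSpace ℝ (Fin d)) => mV * ‖x‖ ^ 2 - MV) μ := i1.sub i2
  have hA : mV * m - MV - ‖gradient V 0‖ * ∫ x, ‖x‖ ∂μ ≤ ∫ x, ⟪x, gradient V x⟫ ∂μ := by
    have h := integral_mono hintA hVint hpt
    rw [integral_sub i12 i3, integral_sub i1 i2,
      integral_const_mul, integral_const_mul, integral_const] at h
    simpa [measure_univ] using h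
  -- ∫ ‖x‖ ≤ √m
  have hsqs : (∫ x, ‖x‖ ∂μ) ^ 2 ≤ m := by
    set a := ∫ x, ‖x‖ ∂μ with ha
    have h0 : 0 ≤ ∫ x, (‖x‖ - a) ^ 2 ∂μ := integral_nonneg fun x => sq_nonneg _
    have hexp : ∫ x, (‖x‖ - a) ^ 2 ∂μ = m - 2 * a * a + a ^ 2 := by
      have heq : (fun x : (EuclideanSpace ℝ (Fin d)) => (‖x‖ - a) ^ 2)
          = fun x => ‖x‖ ^ 2 - (2 * a) * ‖x‖ + a ^ 2 := by funext x; ring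
      have j1 : Integrable (fun x : (EuclideanSpace ℝ (Fin d)) => (2 * a) * ‖x‖) μ :=
        hnorm.const_mul _
      have j2 : Integrable (fun x : (EuclideanSpace ℝ (Fin d)) => ‖x‖ ^ 2 - (2 * a) * ‖x‖) μ :=
        hμ2.sub j1
      have j3 : Integrable (fun _ : (EuclideanSpace ℝ (Fin d)) => a ^ 2) μ := integrable_const _
      rw [heq, integral_add j2 j3, integral_sub hμ2 j1, integral_const_mul, integral_const]
      simp [measure_univ]
      rfl
    nlinarith
  have hsqrt : ∫ x, ‖x‖ ∂μ ≤ Real.sqrt m :=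
    (Real.le_sqrt (integral_nonneg fun x => norm_nonneg _) hm0).mpr hsqs
  -- STEP B : the interaction term
  have hmW : Measurable (gradient W) :=
    ((InnerProductSpace.toDual ℝ (EuclideanSpace ℝ (Fin d))).symm.continuous.measurable).comp (measurable_fderiv ℝ W)
  have hptW : ∀ z : (EuclideanSpace ℝ (Fin d)), |⟪z, gradient W z⟫| ≤ η * ‖z‖ ^ 2 := by
    intro z
    calc |⟪z, gradient W z⟫| ≤ ‖z‖ * ‖gradient W z‖ := abs_real_inner_le_norm _ _
      _ ≤ ‖z‖ * (η * ‖z‖) := mul_le_mul_of_nonneg_left (hgrad z) (norm_nonneg z)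
      _ = η * ‖z‖ ^ 2 := by ring
  have hGint : ∀ x : (EuclideanSpace ℝ (Fin d)), Integrable (fun y : (EuclideanSpace ℝ (Fin d)) => η * ‖x - y‖ ^ 2) μ := by
    intro x
    have heq : (fun y : (EuclideanSpace ℝ (Fin d)) => η * ‖x - y‖ ^ 2)
        = fun y => η * (‖x‖ ^ 2 - 2 * ⟪x, y⟫ + ‖y‖ ^ 2) := by
      funext y; rw [norm_sub_sq_real]
    rw [heq]
    have k1 : Integrable (fun y : (EuclideanSpace ℝ (Fin d)) => ‖x‖ ^ 2 - 2 * ⟪x, y⟫) μ :=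
      (integrable_const _).sub ((hinner2 x).const_mul 2)
    have k2 : Integrable
        (fun y : (EuclideanSpace ℝ (Fin d)) => ‖x‖ ^ 2 - 2 * ⟪x, y⟫ + ‖y‖ ^ 2) μ := k1.add hμ2
    exact k2.const_mul η
  have hGval : ∀ x : (EuclideanSpace ℝ (Fin d)), ∫ y, η * ‖x - y‖ ^ 2 ∂μ = η * (‖x‖ ^ 2 - 2 * ⟪x, b⟫ + m) := by
    intro x
    have heq : (fun y : (EuclideanSpace ℝ (Fin d)) => η * ‖x - y‖ ^ 2)
        = fun y => η * (‖x‖ ^ 2 - 2 * ⟪x, y⟫ + ‖y‖ ^ 2) := by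
      funext y; rw [norm_sub_sq_real]
    have k0 : Integrable (fun y : (EuclideanSpace ℝ (Fin d)) => 2 * ⟪x, y⟫) μ :=
      (hinner2 x).const_mul 2
    have k1 : Integrable (fun y : (EuclideanSpace ℝ (Fin d)) => ‖x‖ ^ 2 - 2 * ⟪x, y⟫) μ :=
      (integrable_const _).sub k0
    rw [heq, integral_const_mul, integral_add k1 hμ2,
      integral_sub (integrable_const (‖x‖ ^ 2)) k0,
      integral_const_mul, hinner x, integral_const]
    simp [measure_univ]
    exact Or.inl rfl
  have hmFy : ∀ x : (EuclideanSpace ℝ (Fin d)), Measurable (fun y : (EuclideanSpace ℝ (Fin d)) => ⟪x - y, gradient W (x - y)⟫) := by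
    intro x
    have hs : Measurable (fun y : (EuclideanSpace ℝ (Fin d)) => x - y) := measurable_const.sub measurable_id
    exact hs.inner (hmW.comp hs)
  have hFy : ∀ x : (EuclideanSpace ℝ (Fin d)), Integrable (fun y : (EuclideanSpace ℝ (Fin d)) => ⟪x - y, gradient W (x - y)⟫) μ := by
    intro x
    refine (hGint x).mono' (hmFy x).aestronglyMeasurable ?_
    filter_upwards with y
    rw [Real.norm_eq_abs]
    exact hptW _
  have habs : ∀ x : (EuclideanSpace ℝ (Fin d)), |∫ y, ⟪x - y, gradient W (x - y)⟫ ∂μ|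
      ≤ η * (‖x‖ ^ 2 - 2 * ⟪x, b⟫ + m) := by
    intro x
    calc |∫ y, ⟪x - y, gradient W (x - y)⟫ ∂μ|
        ≤ ∫ y, |⟪x - y, gradient W (x - y)⟫| ∂μ := by
          simpa [Real.norm_eq_abs] using
            norm_integral_le_integral_norm (fun y => ⟪x - y, gradient W (x - y)⟫)
      _ ≤ ∫ y, η * ‖x - y‖ ^ 2 ∂μ := integral_mono (hFy x).abs (hGint x) fun y => hptW _
      _ = η * (‖x‖ ^ 2 - 2 * ⟪x, b⟫ + m) := hGval x
  have l0 : Integrable (fun x : (EuclideanSpace ℝ (Fin d)) => 2 * ⟪x, b⟫) μ :=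
    hinner2'.const_mul 2
  have l1 : Integrable (fun x : (EuclideanSpace ℝ (Fin d)) => ‖x‖ ^ 2 - 2 * ⟪x, b⟫) μ :=
    hμ2.sub l0
  have l2 : Integrable (fun x : (EuclideanSpace ℝ (Fin d)) => ‖x‖ ^ 2 - 2 * ⟪x, b⟫ + m) μ :=
    l1.add (integrable_const m)
  have hBint : Integrable (fun x : (EuclideanSpace ℝ (Fin d)) => η * (‖x‖ ^ 2 - 2 * ⟪x, b⟫ + m)) μ :=
    l2.const_mul η
  have hFint : Integrable (fun x : (EuclideanSpace ℝ (Fin d)) => ∫ y, ⟪x - y, gradient W (x - y)⟫ ∂μ) μ := by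
    have hmF : Measurable (fun p : (EuclideanSpace ℝ (Fin d)) × (EuclideanSpace ℝ (Fin d)) => ⟪p.1 - p.2, gradient W (p.1 - p.2)⟫) := by
      have hs : Measurable fun p : (EuclideanSpace ℝ (Fin d)) × (EuclideanSpace ℝ (Fin d)) => p.1 - p.2 := measurable_fst.sub measurable_snd
      exact hs.inner (hmW.comp hs)
    refine hBint.mono' ?_ ?_
    · exact (hmF.stronglyMeasurable.integral_prod_right').aestronglyMeasurable
    · filter_upwards with x
      rw [Real.norm_eq_abs]
      exact habs x
  have hBval : ∫ x, η * (‖x‖ ^ 2 - 2 * ⟪x, b⟫ + m) ∂μ = η * (m - 2 * ⟪b, b⟫ + m) := by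
    rw [integral_const_mul, integral_add l1 (integrable_const m),
      integral_sub hμ2 l0, integral_const_mul, integral_const]
    have : ∫ x, ⟪x, b⟫ ∂μ = ⟪b, b⟫ := by
      have h := hinner b
      rw [show (fun x : (EuclideanSpace ℝ (Fin d)) => ⟪x, b⟫) = fun x => ⟪b, x⟫ from funext fun x => real_inner_comm _ _]
      exact h
    rw [this]
    simp [measure_univ]
    exact Or.inl rfl
  have hWfinal : -∫ x, ∫ y, ⟪x - y, gradient W (x - y)⟫ ∂μ ∂μ ≤ 2 * η * m := by
    have h1 : -∫ x, ∫ y, ⟪x - y, gradient W (x - y)⟫ ∂μ ∂μ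
        ≤ ∫ x, η * (‖x‖ ^ 2 - 2 * ⟪x, b⟫ + m) ∂μ := by
      rw [← integral_neg]
      refine integral_mono hFint.neg hBint fun x => ?_
      have := (abs_le.mp (habs x)).1
      linarith
    rw [hBval] at h1
    have h3 : (0:ℝ) ≤ ⟪b, b⟫ := real_inner_self_nonneg
    have h4 : 0 ≤ η * ⟪b, b⟫ := mul_nonneg hη h3
    nlinarith
  have hc : 0 ≤ ‖gradient V 0‖ := norm_nonneg _
  have h5 := mul_le_mul_of_nonneg_left hsqrt hc
  linarith
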